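/- With the weighted left creation operators W associated to positive weights {b_α} and with g^{-1} = 1 + ∑ a_γ Z_γ the inverse series, the boundedness condition sup_N ‖∑_{0≤|β|≤N} a_β W_β W_β*‖ < ∞ holds if and only if sup over N∈ℕ and words α of |∑_{0≤|β|≤N, βγ=α} a_β b_γ / b_α| is finite. In fact, for each N the operator ∑_{0≤|β|≤N} a_β W_β W_β* is diagonal with ‖∑_{0≤|β|≤N} a_β W_β W_β*‖ = sup_{α∈F_n^+} |∑_{βγ=α, 0≤|β|≤N} a_β b_γ / b_α|. -/

import Mathlib

open scoped ENNReal

noncomputable section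

/-- Words over the alphabet `Fin n`: elements of the free monoid `F_n^+`. -/
abbrev Word (n : ℕ) := List (Fin n)

/-- The full Fock space `F²(H_n)`, with orthonormal basis indexed by words. -/
abbrev Fock (n : ℕ) := lp (fun _ : Word n => ℂ) 2

/-- The basis vector `e_α` of the full Fock space. -/
def fockE {n : ℕ} (α : Word n) : Fock n := lp.single 2 α 1

/-- The operator `W_β = W_{i₁} ⋯ W_{i_k}` for a word `β = g_{i₁}⋯g_{i_k}`. -/
def Wword {n : ℕ} (W : Fin n → (Fock n →L[ℂ] Fock n)) (β : Word n) :
    Fock n →L[ℂ] Fock n := (β.map W).prod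

/-- The partial sums `∑_{0 ≤ |β| ≤ N} a_β W_β W_β*`. -/
def partialSumOp {n : ℕ} (a : Word n → ℝ) (W : Fin n → (Fock n →L[ℂ] Fock n)) (N : ℕ) :
    Fock n →L[ℂ] Fock n :=
  ∑ p ∈ Finset.range (N + 1), ∑ f : Fin p → Fin n,
    (a (List.ofFn f) : ℂ) •
      (Wword W (List.ofFn f) * ContinuousLinearMap.adjoint (Wword W (List.ofFn f)))

/-- The diagonal entry `∑_{βγ=α, 0≤|β|≤N} a_β b_γ / b_α` of `∑_{0≤|β|≤N} a_β W_β W_β*`. -/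
def dcoef {n : ℕ} (a b : Word n → ℝ) (N : ℕ) (α : Word n) : ℝ :=
  ∑ k ∈ (Finset.range (α.length + 1)).filter (fun k => k ≤ N),
    a (α.take k) * b (α.drop k) / b α

open scoped InnerProductSpace

section Aux

lemma fockE_apply {n : ℕ} (α γ : Word n) :
    (fockE α : ∀ _ : Word n, ℂ) γ = if γ = α then 1 else 0 := by
  simp [fockE, lp.single_apply, Pi.single_apply]

lemma inner_fockE_left {n : ℕ} (γ : Word n) (v : Fock n) :
    ⟪fockE γ, v⟫_ℂ = v γ := by
  simp [fockE, lp.inner_single_left]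

lemma norm_fockE {n : ℕ} (γ : Word n) : ‖fockE γ‖ = 1 := by
  have := lp.norm_single (p := 2) (E := fun _ : Word n => ℂ) (by norm_num) γ (1:ℂ)
  simpa [fockE] using this

lemma Wword_nil {n : ℕ} (W : Fin n → (Fock n →L[ℂ] Fock n)) : Wword W [] = 1 := rfl

lemma Wword_cons {n : ℕ} (W : Fin n → (Fock n →L[ℂ] Fock n)) (i : Fin n) (β : Word n) :
    Wword W (i :: β) = W i * Wword W β := by
  simp [Wword]

variable {n : ℕ} (a b : Word n → ℝ) (hbpos : ∀ α, 0 < b α)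
    (W : Fin n → (Fock n →L[ℂ] Fock n))
    (hW : ∀ (i : Fin n) (α : Word n), W i (fockE α) =
      (Real.sqrt (b α / b (i :: α)) : ℂ) • fockE (i :: α))

include hbpos hW in
lemma Wword_apply (β α : Word n) :
    Wword W β (fockE α) = (Real.sqrt (b α / b (β ++ α)) : ℂ) • fockE (β ++ α) := by
  induction β with
  | nil => simp [Wword_nil, div_self (hbpos α).ne']
  | cons i β ih =>
    rw [Wword_cons]
    simp only [ContinuousLinearMap.mul_apply, ih, map_smul, hW]
    rw [smul_smul, List.cons_append]
    congr 1
    rw [← Complex.ofReal_mul,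
      ← Real.sqrt_mul (div_nonneg (hbpos _).le (hbpos _).le), div_mul_div_comm,
      mul_comm (b α), mul_div_mul_left _ _ (hbpos _).ne']

include hbpos hW in
lemma adjoint_Wword_apply (β α : Word n) :
    (ContinuousLinearMap.adjoint (Wword W β)) (fockE α) =
      ((if α.take β.length = β then Real.sqrt (b (α.drop β.length) / b α) else 0 : ℝ) : ℂ)
        • fockE (α.drop β.length) := by
  apply lp.ext
  funext γ
  have h1 : (ContinuousLinearMap.adjoint (Wword W β) (fockE α) : ∀ _ : Word n, ℂ) γ
      = ⟪Wword W β (fockE γ), fockE α⟫_ℂ := by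
    rw [← inner_fockE_left, ContinuousLinearMap.adjoint_inner_right]
  rw [lp.coeFn_smul, Pi.smul_apply, h1, Wword_apply b hbpos W hW, inner_smul_left,
    inner_fockE_left, fockE_apply, fockE_apply]
  by_cases h : β ++ γ = α
  · subst h
    simp [List.take_left, List.drop_left]
  · rw [if_neg h]
    by_cases h2 : γ = (α.drop β.length)
    · subst h2
      have : ¬ (α.take β.length = β) := by
        intro ht
        have h3 := List.take_append_drop β.length α
        rw [ht] at h3
        exact h h3
      simp [this]
    · simp [h2]

include hbpos hW in
lemma WWstar_apply (β α : Word n) :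
    (Wword W β * ContinuousLinearMap.adjoint (Wword W β)) (fockE α) =
      ((if α.take β.length = β then b (α.drop β.length) / b α else 0 : ℝ) : ℂ) • fockE α := by
  rw [ContinuousLinearMap.mul_apply, adjoint_Wword_apply b hbpos W hW, map_smul,
    Wword_apply b hbpos W hW]
  by_cases h : α.take β.length = β
  · rw [if_pos h, if_pos h, smul_smul]
    have hα := List.take_append_drop β.length α
    rw [h] at hα
    rw [hα, ← Complex.ofReal_mul,
      Real.mul_self_sqrt (div_nonneg (hbpos _).le (hbpos _).le)]
  · simp [h]

include hbpos hW in
lemma diag_apply (N : ℕ) (α : Word n) :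
    partialSumOp a W N (fockE α) = ((dcoef a b N α : ℝ) : ℂ) • fockE α := by
  have key : ∀ p : ℕ, (∑ f : Fin p → Fin n,
      ((a (List.ofFn f) : ℂ) • (Wword W (List.ofFn f) *
        ContinuousLinearMap.adjoint (Wword W (List.ofFn f)))) (fockE α))
      = ((if p ≤ α.length then a (α.take p) * b (α.drop p) / b α else 0 : ℝ) : ℂ) • fockE α := by
    intro p
    by_cases h : p ≤ α.length
    · have hlen : (α.take p).length = p := by
        rw [List.length_take]; omega
      set f₀ : Fin p → Fin n := fun i => α.get ⟨i, lt_of_lt_of_le i.isLt h⟩ with hf₀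
      have hofn : List.ofFn f₀ = α.take p := by
        apply List.ext_getElem
        · simp [hlen]
        · intro i h1 h2
          simp [hf₀, List.getElem_take]
      rw [if_pos h]
      rw [Finset.sum_eq_single f₀]
      · rw [ContinuousLinearMap.smul_apply, WWstar_apply b hbpos W hW, hofn, hlen, if_pos rfl,
          smul_smul, ← Complex.ofReal_mul, mul_div_assoc]
      · intro f _ hf
        rw [ContinuousLinearMap.smul_apply, WWstar_apply b hbpos W hW]
        have hne : ¬ α.take (List.ofFn f).length = List.ofFn f := by
          rw [List.length_ofFn, ← hofn]
          intro hc
          exact hf (List.ofFn_injective hc.symm)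
        rw [if_neg hne]
        simp
      · intro hmem
        exact absurd (Finset.mem_univ f₀) hmem
    · rw [if_neg h, Complex.ofReal_zero, zero_smul]
      apply Finset.sum_eq_zero
      intro f _
      rw [ContinuousLinearMap.smul_apply, WWstar_apply b hbpos W hW]
      have hne : ¬ α.take (List.ofFn f).length = List.ofFn f := by
        rw [List.length_ofFn]
        intro hc
        have := congrArg List.length hc
        rw [List.length_take, List.length_ofFn] at this
        omega
      rw [if_neg hne]
      simp
  rw [partialSumOp]
  rw [ContinuousLinearMap.sum_apply]
  have : ∀ p ∈ Finset.range (N+1), (∑ f : Fin p → Fin n,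
      (a (List.ofFn f) : ℂ) • (Wword W (List.ofFn f) *
        ContinuousLinearMap.adjoint (Wword W (List.ofFn f)))) (fockE α)
      = ((if p ≤ α.length then a (α.take p) * b (α.drop p) / b α else 0 : ℝ) : ℂ) • fockE α := by
    intro p _
    rw [ContinuousLinearMap.sum_apply]
    exact key p
  rw [Finset.sum_congr rfl this, ← Finset.sum_smul]
  congr 1
  rw [← Complex.ofReal_sum]
  congr 1
  rw [dcoef, ← Finset.sum_filter]
  apply Finset.sum_congr
  · apply Finset.ext
    intro k
    simp only [Finset.mem_filter, Finset.mem_range]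
    omega
  · intros
    rfl

lemma psop_selfAdjoint (N : ℕ) : IsSelfAdjoint (partialSumOp a W N) := by
  unfold IsSelfAdjoint partialSumOp
  rw [star_sum]
  apply Finset.sum_congr rfl
  intro p _
  rw [star_sum]
  apply Finset.sum_congr rfl
  intro f _
  simp [star_smul, star_mul, ContinuousLinearMap.star_eq_adjoint,
    ContinuousLinearMap.adjoint_adjoint, Complex.star_def, Complex.conj_ofReal]

include hbpos hW in
lemma psop_coord (N : ℕ) (x : Fock n) (γ : Word n) :
    (partialSumOp a W N x : ∀ _ : Word n, ℂ) γ = ((dcoef a b N γ : ℝ) : ℂ) * x γ := by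
  have h1 : ContinuousLinearMap.adjoint (partialSumOp a W N) = partialSumOp a W N := by
    rw [← ContinuousLinearMap.star_eq_adjoint]
    exact psop_selfAdjoint a W N
  calc (partialSumOp a W N x : ∀ _ : Word n, ℂ) γ
      = ⟪fockE γ, partialSumOp a W N x⟫_ℂ := (inner_fockE_left _ _).symm
    _ = ⟪ContinuousLinearMap.adjoint (partialSumOp a W N) (fockE γ), x⟫_ℂ := by
        rw [ContinuousLinearMap.adjoint_inner_left]
    _ = ⟪partialSumOp a W N (fockE γ), x⟫_ℂ := by rw [h1]
    _ = ((dcoef a b N γ : ℝ) : ℂ) * x γ := by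
        rw [diag_apply a b hbpos W hW, inner_smul_left, inner_fockE_left, Complex.conj_ofReal]

include hbpos hW in
lemma dcoef_le_norm (N : ℕ) (α : Word n) :
    |dcoef a b N α| ≤ ‖partialSumOp a W N‖ := by
  have h1 : ‖partialSumOp a W N (fockE α)‖ = |dcoef a b N α| := by
    rw [diag_apply a b hbpos W hW, norm_smul, norm_fockE, mul_one, Complex.norm_real,
      Real.norm_eq_abs]
  calc |dcoef a b N α| = ‖partialSumOp a W N (fockE α)‖ := h1.symm
    _ ≤ ‖partialSumOp a W N‖ * ‖fockE α‖ := (partialSumOp a W N).le_opNorm _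
    _ = ‖partialSumOp a W N‖ := by rw [norm_fockE, mul_one]

include hbpos hW in
lemma psop_norm (N : ℕ) :
    ‖partialSumOp a W N‖ = ⨆ α : Word n, |dcoef a b N α| := by
  have hle : ∀ α : Word n, |dcoef a b N α| ≤ ‖partialSumOp a W N‖ :=
    dcoef_le_norm a b hbpos W hW N
  have hbdd : BddAbove (Set.range fun α : Word n => |dcoef a b N α|) :=
    ⟨‖partialSumOp a W N‖, by rintro _ ⟨α, rfl⟩; exact hle α⟩
  set M := ⨆ α : Word n, |dcoef a b N α| with hM
  have hMle : ∀ α, |dcoef a b N α| ≤ M := fun α => le_ciSup hbdd α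
  have hM0 : 0 ≤ M := le_trans (abs_nonneg _) (hMle [])
  apply le_antisymm
  · apply ContinuousLinearMap.opNorm_le_bound _ hM0
    intro x
    have hp : (0:ℝ) < (2 : ℝ≥0∞).toReal := by norm_num
    have h2 : ((2 : ℝ≥0∞).toReal) = (2:ℝ) := by norm_num
    have hTx := lp.norm_rpow_eq_tsum hp (partialSumOp a W N x)
    have hx := lp.norm_rpow_eq_tsum hp x
    have hsq : ‖partialSumOp a W N x‖ ^ (2:ℝ) ≤ (M * ‖x‖) ^ (2:ℝ) := by
      rw [← h2, hTx]
      have hsum1 : Summable (fun γ : Word n =>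
          ‖(partialSumOp a W N x : ∀ _ : Word n, ℂ) γ‖ ^ (2 : ℝ≥0∞).toReal) :=
        (lp.memℓp _).summable hp
      have hsum2 : Summable (fun γ : Word n =>
          M ^ (2 : ℝ≥0∞).toReal * ‖(x : ∀ _ : Word n, ℂ) γ‖ ^ (2 : ℝ≥0∞).toReal) :=
        ((lp.memℓp x).summable hp).mul_left _
      calc (∑' γ : Word n, ‖(partialSumOp a W N x : ∀ _ : Word n, ℂ) γ‖ ^ (2 : ℝ≥0∞).toReal)
          ≤ ∑' γ : Word n,
              M ^ (2 : ℝ≥0∞).toReal * ‖(x : ∀ _ : Word n, ℂ) γ‖ ^ (2 : ℝ≥0∞).toReal := by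
            apply Summable.tsum_le_tsum _ hsum1 hsum2
            intro γ
            rw [psop_coord a b hbpos W hW N x γ, h2, ← Real.mul_rpow hM0 (norm_nonneg _)]
            apply Real.rpow_le_rpow (norm_nonneg _) _ (by norm_num)
            rw [norm_mul, Complex.norm_real, Real.norm_eq_abs]
            exact mul_le_mul_of_nonneg_right (hMle γ) (norm_nonneg _)
        _ = M ^ (2 : ℝ≥0∞).toReal *
              ∑' γ : Word n, ‖(x : ∀ _ : Word n, ℂ) γ‖ ^ (2 : ℝ≥0∞).toReal :=
            tsum_mul_left
        _ = (M * ‖x‖) ^ (2 : ℝ≥0∞).toReal := by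
            rw [← hx, Real.mul_rpow hM0 (norm_nonneg _)]
    have hnn : (0:ℝ) ≤ M * ‖x‖ := mul_nonneg hM0 (norm_nonneg _)
    rw [Real.rpow_two, Real.rpow_two] at hsq
    nlinarith [norm_nonneg (partialSumOp a W N x)]
  · exact ciSup_le hle

end Aux

/-- for the weighted left creation operators `W` associated to positive
weights `b` (with `b_{g₀}=1` and `sup_α b_α/b_{g_iα} < ∞`) and inverse coefficients `a`
(with `a_{g₀}=1`), each operator `∑_{0≤|β|≤N} a_β W_β W_β*` is diagonal with norm
`sup_α |∑_{βγ=α, 0≤|β|≤N} a_β b_γ / b_α|`; consequently the partial sums are uniformly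
norm-bounded iff the diagonal entries are uniformly bounded. -/
theorem stmt5 {n : ℕ} (a b : Word n → ℝ) (hbpos : ∀ α, 0 < b α) (hb0 : b [] = 1)
    (ha0 : a [] = 1)
    (hsup : ∀ i : Fin n, ∃ C : ℝ, ∀ α, b α / b (i :: α) ≤ C)
    (hinv : ∀ γ : Word n, γ ≠ [] →
      b γ + ∑ k ∈ Finset.Icc 1 γ.length, a (γ.take k) * b (γ.drop k) = 0)
    (W : Fin n → (Fock n →L[ℂ] Fock n))
    (hW : ∀ (i : Fin n) (α : Word n), W i (fockE α) =
      (Real.sqrt (b α / b (i :: α)) : ℂ) • fockE (i :: α)) :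
    (∀ (N : ℕ) (α : Word n),
      partialSumOp a W N (fockE α) = (dcoef a b N α : ℂ) • fockE α) ∧
    (∀ N : ℕ, ‖partialSumOp a W N‖ = ⨆ α : Word n, |dcoef a b N α|) ∧
    ((∃ C : ℝ, ∀ N : ℕ, ‖partialSumOp a W N‖ ≤ C) ↔
      (∃ C : ℝ, ∀ (N : ℕ) (α : Word n), |dcoef a b N α| ≤ C)) := by
  refine ⟨fun N α => diag_apply a b hbpos W hW N α,
    fun N => psop_norm a b hbpos W hW N, ?_, ?_⟩
  · rintro ⟨C, hC⟩
    exact ⟨C, fun N α => le_trans (dcoef_le_norm a b hbpos W hW N α) (hC N)⟩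
  · rintro ⟨C, hC⟩
    refine ⟨C, fun N => ?_⟩
    rw [psop_norm a b hbpos W hW N]
    exact ciSup_le (fun α => hC N α)
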